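/- Let d = 2, let r ≥ 1 and let D_j = 6^j·96·r³ for every j ∈ ℕ. Then for all sufficiently large n, for every A ⊆ Z_n^2 with |A| ≥ n²/2, there exists J ∈ ℕ and an (r², D)-dormitory hierarchy (A_j, C_j)_{j ≤ J} on A such that |A_J| ≥ |A| − n²/2 and every set C ∈ C_0 is 8r-connected and satisfies |C ∩ B(x, 4r)| ≥ r² for every x ∈ C. -/

import Mathlib

/-- The distance on the torus `(ℤ/nℤ)^d`: the infimum of the sup-norm distances between
integer lifts of the two points. -/
noncomputable def torusDist {d n : ℕ} (x y : Fin d → ZMod n) : ℕ :=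
  sInf {k : ℕ | ∃ a b : Fin d → ℤ,
    (∀ i, (a i : ZMod n) = x i) ∧ (∀ i, (b i : ZMod n) = y i) ∧
    (Finset.univ.sup fun i => (a i - b i).natAbs) = k}

/-- The closed ball of radius `r` around `x` in the torus `(ℤ/nℤ)^d`. -/
def torusBall {d n : ℕ} (x : Fin d → ZMod n) (r : ℕ) : Set (Fin d → ZMod n) :=
  {y | torusDist x y ≤ r}

/-- A set `C ⊆ (ℤ/nℤ)^d` is `r`-connected if any two of its points can be joined by a
finite sequence of points of `C` whose consecutive terms are at distance at most `r`. -/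
def torusRConnected {d n : ℕ} (r : ℕ) (C : Set (Fin d → ZMod n)) : Prop :=
  ∀ x ∈ C, ∀ y ∈ C, ∃ (k : ℕ) (f : ℕ → Fin d → ZMod n),
    f 0 = x ∧ f k = y ∧ (∀ j ≤ k, f j ∈ C) ∧ ∀ j < k, torusDist (f j) (f (j + 1)) ≤ r

/-- The diameter of a subset of the torus `(ℤ/nℤ)^d`. -/
noncomputable def torusDiam {d n : ℕ} (C : Set (Fin d → ZMod n)) : ℕ :=
  sSup {k : ℕ | ∃ x ∈ C, ∃ y ∈ C, torusDist x y = k}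

/-- `𝒞` is a partition of the set `A`: its members are non-empty, pairwise disjoint,
and their union is `A`. -/
def IsPartitionOf {α : Type*} (𝒞 : Set (Set α)) (A : Set α) : Prop :=
  (∀ C ∈ 𝒞, C.Nonempty) ∧ ⋃₀ 𝒞 = A ∧
    ∀ C ∈ 𝒞, ∀ C' ∈ 𝒞, C ≠ C' → Disjoint C C'

/-- A `(v, D)`-dormitory hierarchy on a set `A ⊆ (ℤ/nℤ)^d`: a decreasing sequence of
subsets `A ⊇ A_0 ⊇ ⋯ ⊇ A_J` together with partitions `𝒞_j` of `A_j` such that: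
(i) every cluster `C ∈ 𝒞_j` satisfies `|C| ≥ 2^⌊j/2⌋ v`;
(ii) every cluster `C ∈ 𝒞_{j+1} \ 𝒞_j` has diameter at most `D j` and is the union of
two clusters of `𝒞_j`;
(iii) the last partition `𝒞_J` consists of a single set. -/
structure DormitoryHierarchy (d n v : ℕ) (D : ℕ → ℕ) (A : Set (Fin d → ZMod n)) where
  J : ℕ
  level : ℕ → Set (Fin d → ZMod n)
  part : ℕ → Set (Set (Fin d → ZMod n))
  level_zero_subset : level 0 ⊆ A
  level_antitone : ∀ j, j + 1 ≤ J → level (j + 1) ⊆ level j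
  part_isPartition : ∀ j ≤ J, IsPartitionOf (part j) (level j)
  card_ge : ∀ j ≤ J, ∀ C ∈ part j, 2 ^ (j / 2) * v ≤ C.ncard
  merge : ∀ j, j + 1 ≤ J → ∀ C ∈ part (j + 1), C ∉ part j →
    torusDiam C ≤ D j ∧ ∃ C₀ ∈ part j, ∃ C₁ ∈ part j, C = C₀ ∪ C₁
  final : ∃ C, part J = {C}

namespace DormHelper

/-- Interval endpoints: `E n i t = ⌊n t / 2^i⌋`. -/
def E (n i t : ℕ) : ℕ := n * t / 2 ^ i

/-- Index of the depth-`i` interval containing `v`. -/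
def idx (n i v : ℕ) : ℕ := (2 ^ i * (v + 1) - 1) / n

lemma E_mono (n i : ℕ) : Monotone (E n i) :=
  fun _ _ h => Nat.div_le_div_right (Nat.mul_le_mul_left _ h)

lemma idx_spec {n : ℕ} (hn : 0 < n) (i v : ℕ) :
    E n i (idx n i v) ≤ v ∧ v < E n i (idx n i v + 1) := by
  have hP : 0 < 2 ^ i := Nat.pow_pos (by norm_num)
  set t := idx n i v with htdef
  -- basic div facts about t = (2^i*(v+1)-1)/n
  have h2 : n * t ≤ 2 ^ i * (v + 1) - 1 := by
    rw [htdef, idx, mul_comm]; exact Nat.div_mul_le_self _ _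
  have h3 : 2 ^ i * (v + 1) - 1 < n * (t + 1) := by
    rw [htdef, idx]
    have h1 := Nat.div_add_mod (2 ^ i * (v + 1) - 1) n
    have hm := Nat.mod_lt (2 ^ i * (v + 1) - 1) hn
    have : n * ((2 ^ i * (v + 1) - 1)/n + 1) = n * ((2 ^ i * (v + 1) - 1)/n) + n := by ring
    omega
  have hX : 0 < 2 ^ i * (v + 1) := by positivity
  constructor
  · -- E n i t ≤ v
    rw [E]
    have e1 := Nat.div_add_mod (n * t) (2 ^ i)
    have e2 := Nat.mod_lt (n * t) hP
    have e3 : 2 ^ i * (v + 1) = 2 ^ i * v + 2 ^ i := by ring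
    -- n*t ≤ 2^i*v + 2^i - 1, so 2^i * (n*t/2^i) ≤ 2^i*v + 2^i -1, hence div ≤ v
    by_contra hc
    push_neg at hc
    have : 2 ^ i * (v + 1) ≤ 2 ^ i * (n * t / 2 ^ i) := Nat.mul_le_mul_left _ hc
    omega
  · -- v < E n i (t+1)
    rw [E]
    have e1 := Nat.div_add_mod (n * (t+1)) (2 ^ i)
    have e2 := Nat.mod_lt (n * (t+1)) hP
    by_contra hc
    push_neg at hc
    -- n*(t+1)/2^i ≤ v, so n*(t+1) ≤ 2^i v + 2^i - 1 < 2^i (v+1). But 2^i(v+1)-1 < n(t+1).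
    have : 2 ^ i * (n * (t+1) / 2 ^ i) ≤ 2 ^ i * v := Nat.mul_le_mul_left _ hc
    have e3 : 2 ^ i * (v + 1) = 2 ^ i * v + 2 ^ i := by ring
    omega

lemma idx_lt {n : ℕ} (hn : 0 < n) {i v : ℕ} (hv : v < n) : idx n i v < 2 ^ i := by
  have hP : 0 < 2 ^ i := Nat.pow_pos (by norm_num)
  rw [idx]
  have h1 := Nat.div_add_mod (2 ^ i * (v + 1) - 1) n
  have hm := Nat.mod_lt (2 ^ i * (v + 1) - 1) hn
  by_contra hc
  push_neg at hc
  have : n * 2 ^ i ≤ n * ((2 ^ i * (v + 1) - 1) / n) := Nat.mul_le_mul_left _ hc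
  have h4 : 2 ^ i * (v+1) ≤ 2^i * n := Nat.mul_le_mul_left _ (by omega)
  have h5 : n * 2 ^ i = 2 ^ i * n := by ring
  have hX : 0 < 2 ^ i * (v + 1) := by positivity
  omega

lemma idx_eq_iff {n : ℕ} (hn : 0 < n) {i v t : ℕ} :
    idx n i v = t ↔ E n i t ≤ v ∧ v < E n i (t + 1) := by
  constructor
  · rintro rfl; exact idx_spec hn i v
  · rintro ⟨h1, h2⟩
    obtain ⟨g1, g2⟩ := idx_spec hn i v
    rcases Nat.lt_trichotomy (idx n i v) t with h | h | h
    · have := E_mono n i (show idx n i v + 1 ≤ t by omega)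
      omega
    · exact h
    · have := E_mono n i (show t + 1 ≤ idx n i v by omega)
      omega

lemma E_len_lower {n r m i : ℕ} (hn : 2 * r * 2 ^ m ≤ n) (hi : i ≤ m) (t : ℕ) :
    E n i t + 2 * r * 2 ^ (m - i) ≤ E n i (t + 1) := by
  have hP : 0 < 2 ^ i := Nat.pow_pos (by norm_num)
  have key : 2 * r * 2 ^ (m - i) * 2 ^ i = 2 * r * 2 ^ m := by
    rw [mul_assoc, ← pow_add]
    congr 2
    omega
  rw [E, E]
  have e1 := Nat.div_add_mod (n * t) (2 ^ i)
  have e2 := Nat.mod_lt (n * t) hP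
  have e3 := Nat.div_add_mod (n * (t + 1)) (2 ^ i)
  have e4 := Nat.mod_lt (n * (t + 1)) hP
  have e5 : n * (t + 1) = n * t + n := by ring
  have hlt : 2 ^ i * (n * t / 2 ^ i + 2 * r * 2 ^ (m - i)) < 2 ^ i * (n * (t + 1) / 2 ^ i + 1) := by
    have exp1 : 2 ^ i * (n * t / 2 ^ i + 2 * r * 2 ^ (m - i)) =
        2 ^ i * (n * t / 2 ^ i) + 2 * r * 2 ^ (m - i) * 2 ^ i := by ring
    have exp2 : 2 ^ i * (n * (t + 1) / 2 ^ i + 1) = 2 ^ i * (n * (t + 1) / 2 ^ i) + 2 ^ i := by ring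
    omega
  have := Nat.lt_of_mul_lt_mul_left hlt
  omega

/-- length upper bound -/
lemma E_len_upper {n r m i : ℕ} (hn : n < 4 * r * 2 ^ m) (hi : i ≤ m) (t : ℕ) :
    E n i (t + 1) ≤ E n i t + 4 * r * 2 ^ (m - i) := by
  have hP : 0 < 2 ^ i := Nat.pow_pos (by norm_num)
  have key : 4 * r * 2 ^ (m - i) * 2 ^ i = 4 * r * 2 ^ m := by
    rw [mul_assoc, ← pow_add]; congr 2; omega
  rw [E, E]
  have e1 := Nat.div_add_mod (n * t) (2 ^ i)
  have e2 := Nat.mod_lt (n * t) hP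
  have e3 := Nat.div_add_mod (n * (t + 1)) (2 ^ i)
  have e4 := Nat.mod_lt (n * (t + 1)) hP
  have e5 : n * (t + 1) = n * t + n := by ring
  have hlt : 2 ^ i * (n * (t + 1) / 2 ^ i) < 2 ^ i * (n * t / 2 ^ i + (4 * r * 2 ^ (m - i)) + 1) := by
    have exp1 : 2 ^ i * (n * t / 2 ^ i + (4 * r * 2 ^ (m - i)) + 1) =
        2 ^ i * (n * t / 2 ^ i) + 4 * r * 2 ^ (m - i) * 2 ^ i + 2 ^ i := by ring
    omega
  have := Nat.lt_of_mul_lt_mul_left hlt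
  omega

/-- coarsening: the depth-`i` index is the depth-`i+1` index halved. -/
lemma idx_coarsen {n : ℕ} (hn : 0 < n) (i v : ℕ) :
    idx n i v = idx n (i + 1) v / 2 := by
  rw [idx, idx, Nat.div_div_eq_div_mul]
  have h1 : 2 ^ (i+1) * (v+1) - 1 = 2 * (2 ^ i * (v + 1)) - 1 := by ring_nf
  rw [h1]
  set M := 2 ^ i * (v + 1) with hM
  have hMpos : 0 < M := by positivity
  -- claim : (M-1)/n = (2M - 1)/(n*2)
  have d1 := Nat.div_add_mod (M - 1) n
  have dm := Nat.mod_lt (M - 1) hn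
  symm
  apply Nat.div_eq_of_lt_le
  · -- (M-1)/n * (n*2) ≤ 2M - 1
    have : (M - 1) / n * (n * 2) = 2 * (n * ((M-1)/n)) := by ring
    omega
  · -- 2M - 1 < ((M-1)/n + 1) * (n*2)
    have : ((M - 1) / n + 1) * (n * 2) = 2 * (n * ((M-1)/n)) + 2 * n := by ring
    omega



open Finset

/-- horizontal depth at level `j` -/
def pdep (m j : ℕ) : ℕ := m - (j + 1) / 2

/-- vertical depth at level `j` -/
def qdep (m j : ℕ) : ℕ := m - j / 2

/-- the box index of a point at level `j` -/
def bIdx (n m j : ℕ) (z : Fin 2 → ZMod n) : ℕ × ℕ :=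
  (idx n (pdep m j) (z 0).val, idx n (qdep m j) (z 1).val)

/-- size threshold at level `j` -/
def theta (r j : ℕ) : ℕ := 2 ^ (j / 2) * r ^ 2

/-- fiber of a box -/
def fib (n m j : ℕ) (T : Finset (Fin 2 → ZMod n)) (c : ℕ × ℕ) : Finset (Fin 2 → ZMod n) :=
  T.filter fun w => bIdx n m j w = c

/-- one step of the cleaning process -/
def step (n r m j : ℕ) (T : Finset (Fin 2 → ZMod n)) : Finset (Fin 2 → ZMod n) :=
  T.filter fun z => theta r j ≤ (fib n m j T (bIdx n m j z)).card

/-- the cleaning process -/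
def S (n r m : ℕ) (A : Finset (Fin 2 → ZMod n)) : ℕ → Finset (Fin 2 → ZMod n)
  | 0 => step n r m 0 A
  | j + 1 => step n r m (j + 1) (S n r m A j)

lemma mem_step {n r m j : ℕ} {T : Finset (Fin 2 → ZMod n)} {z : Fin 2 → ZMod n} :
    z ∈ step n r m j T ↔ z ∈ T ∧ theta r j ≤ (fib n m j T (bIdx n m j z)).card :=
  Finset.mem_filter

lemma step_subset {n r m j : ℕ} {T : Finset (Fin 2 → ZMod n)} :
    step n r m j T ⊆ T := Finset.filter_subset _ _

lemma mem_fib {n m j : ℕ} {T : Finset (Fin 2 → ZMod n)} {c : ℕ × ℕ} {w : Fin 2 → ZMod n} :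
    w ∈ fib n m j T c ↔ w ∈ T ∧ bIdx n m j w = c := Finset.mem_filter

lemma fib_step_eq {n r m j : ℕ} {T : Finset (Fin 2 → ZMod n)} (c : ℕ × ℕ) :
    fib n m j (step n r m j T) c =
      if theta r j ≤ (fib n m j T c).card then fib n m j T c else ∅ := by
  ext w
  rcases le_or_gt (theta r j) ((fib n m j T c).card) with h | h
  · rw [if_pos h]
    constructor
    · intro hw
      obtain ⟨hw1, hw2⟩ := mem_fib.mp hw
      exact mem_fib.mpr ⟨(mem_step.mp hw1).1, hw2⟩
    · intro hw
      obtain ⟨hw1, hw2⟩ := mem_fib.mp hw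
      refine mem_fib.mpr ⟨mem_step.mpr ⟨hw1, ?_⟩, hw2⟩
      rw [hw2]; exact h
  · rw [if_neg (not_le.mpr h)]
    simp only [Finset.notMem_empty, iff_false]
    intro hw
    obtain ⟨hw1, hw2⟩ := mem_fib.mp hw
    obtain ⟨hz1, hz2⟩ := mem_step.mp hw1
    rw [hw2] at hz2
    omega

lemma step_fib_large {n r m j : ℕ} {T : Finset (Fin 2 → ZMod n)} {z : Fin 2 → ZMod n}
    (hz : z ∈ step n r m j T) :
    fib n m j (step n r m j T) (bIdx n m j z) = fib n m j T (bIdx n m j z) ∧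
      theta r j ≤ (fib n m j T (bIdx n m j z)).card := by
  have h := (mem_step.mp hz).2
  exact ⟨by rw [fib_step_eq, if_pos h], h⟩

lemma S_is_step {n r m : ℕ} (A : Finset (Fin 2 → ZMod n)) (j : ℕ) :
    ∃ T, S n r m A j = step n r m j T ∧ T ⊆ A := by
  cases j with
  | zero => exact ⟨A, rfl, le_refl A⟩
  | succ j =>
      refine ⟨S n r m A j, rfl, ?_⟩
      induction j with
      | zero => exact step_subset
      | succ i ih => exact step_subset.trans ih

lemma S_subset_A {n r m : ℕ} (A : Finset (Fin 2 → ZMod n)) (j : ℕ) :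
    S n r m A j ⊆ A := by
  obtain ⟨T, hT, hTA⟩ := S_is_step A j
  rw [hT]; exact step_subset.trans hTA

lemma S_succ_subset {n r m : ℕ} (A : Finset (Fin 2 → ZMod n)) (j : ℕ) :
    S n r m A (j + 1) ⊆ S n r m A j := step_subset

/-- every point of `S j` lies in a large fiber -/
lemma S_fib_card {n r m : ℕ} (A : Finset (Fin 2 → ZMod n)) (j : ℕ) {z : Fin 2 → ZMod n}
    (hz : z ∈ S n r m A j) :
    theta r j ≤ (fib n m j (S n r m A j) (bIdx n m j z)).card := by
  obtain ⟨T, hT, -⟩ := S_is_step A j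
  rw [hT] at hz ⊢
  obtain ⟨heq, hge⟩ := step_fib_large hz
  rw [heq]; exact hge

lemma row_card {n : ℕ} [NeZero n] {i u : ℕ} (hu : u + 1 ≤ 2 ^ i) :
    (Finset.univ.filter fun x : ZMod n => idx n i x.val = u).card = E n i (u + 1) - E n i u := by
  have hn : 0 < n := Nat.pos_of_ne_zero (NeZero.ne n)
  have hEn : E n i (u + 1) ≤ n := by
    have h1 : E n i (u + 1) ≤ E n i (2 ^ i) := E_mono n i hu
    have h2 : E n i (2 ^ i) = n := by
      rw [E]; exact Nat.mul_div_cancel n (Nat.pow_pos (by norm_num))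
    omega
  rw [← Nat.card_Ico]
  refine Finset.card_nbij' (fun x => x.val) (fun k => ((k : ZMod n) : ZMod n)) ?_ ?_ ?_ ?_
  · intro x hx
    rw [Finset.mem_coe, Finset.mem_filter] at hx
    have := (idx_eq_iff hn).mp hx.2
    exact Finset.mem_Ico.mpr this
  · intro k hk
    rw [Finset.mem_coe, Finset.mem_Ico] at hk
    have hkn : k < n := lt_of_lt_of_le hk.2 hEn
    rw [Finset.mem_coe, Finset.mem_filter]
    refine ⟨Finset.mem_univ _, ?_⟩
    rw [ZMod.val_cast_of_lt hkn]
    exact (idx_eq_iff hn).mpr hk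
  · intro x _
    exact ZMod.natCast_rightInverse x
  · intro k hk
    rw [Finset.mem_coe, Finset.mem_Ico] at hk
    exact ZMod.val_cast_of_lt (lt_of_lt_of_le hk.2 hEn)

lemma box_card_eq {n m j : ℕ} [NeZero n] (c : ℕ × ℕ) :
    (Finset.univ.filter fun w : Fin 2 → ZMod n => bIdx n m j w = c).card =
      (Finset.univ.filter fun x : ZMod n => idx n (pdep m j) x.val = c.1).card *
        (Finset.univ.filter fun x : ZMod n => idx n (qdep m j) x.val = c.2).card := by
  rw [← Finset.card_product]
  apply Finset.card_nbij' (fun w => (w 0, w 1)) (fun p => ![p.1, p.2])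
  · intro w hw
    rw [Finset.mem_coe, Finset.mem_filter] at hw
    have hb := hw.2
    rw [bIdx, Prod.ext_iff] at hb
    simp only [Finset.mem_coe, Finset.mem_product, Finset.mem_filter, Finset.mem_univ, true_and]
    exact hb
  · intro p hp
    simp only [Finset.mem_coe, Finset.mem_product, Finset.mem_filter, Finset.mem_univ, true_and] at hp
    rw [Finset.mem_coe, Finset.mem_filter]
    refine ⟨Finset.mem_univ _, ?_⟩
    rw [bIdx, Prod.ext_iff]
    simpa using hp
  · intro w _
    funext i
    fin_cases i <;> simp
  · intro p _
    simp

lemma pdep_eq {m j : ℕ} (hj : j ≤ 2 * m) : m - pdep m j = (j + 1) / 2 := by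
  rw [pdep]; omega

lemma qdep_eq {m j : ℕ} (hj : j ≤ 2 * m) : m - qdep m j = j / 2 := by
  rw [qdep]; omega

lemma box_card_lower {n r m j : ℕ} [NeZero n] (hnl : 2 * r * 2 ^ m ≤ n) (hj : j ≤ 2 * m)
    (z : Fin 2 → ZMod n) :
    4 * r ^ 2 * 2 ^ j ≤
      (Finset.univ.filter fun w : Fin 2 → ZMod n => bIdx n m j w = bIdx n m j z).card := by
  have hn : 0 < n := Nat.pos_of_ne_zero (NeZero.ne n)
  rw [box_card_eq]
  have h0 : (z 0).val < n := ZMod.val_lt _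
  have h1 : (z 1).val < n := ZMod.val_lt _
  have hu0 : idx n (pdep m j) (z 0).val + 1 ≤ 2 ^ pdep m j := idx_lt hn h0
  have hu1 : idx n (qdep m j) (z 1).val + 1 ≤ 2 ^ qdep m j := idx_lt hn h1
  rw [bIdx]
  rw [row_card hu0, row_card hu1]
  have l0 := E_len_lower (r := r) hnl (Nat.sub_le m ((j+1)/2)) (idx n (pdep m j) (z 0).val)
  have l1 := E_len_lower (r := r) hnl (Nat.sub_le m (j/2)) (idx n (qdep m j) (z 1).val)
  rw [pdep] at l0
  rw [qdep] at l1
  have e0 : m - (m - (j+1)/2) = (j+1)/2 := by omega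
  have e1 : m - (m - j/2) = j/2 := by omega
  rw [e0] at l0
  rw [e1] at l1
  calc 4 * r ^ 2 * 2 ^ j = (2 * r * 2 ^ ((j+1)/2)) * (2 * r * 2 ^ (j/2)) := by
        rw [show (2*r*2^((j+1)/2)) * (2*r*2^(j/2)) = 4*r^2*(2^((j+1)/2)*2^(j/2)) by ring,
          ← pow_add]
        congr 2
        omega
    _ ≤ _ := by
        apply Nat.mul_le_mul
        · rw [pdep]; omega
        · rw [qdep]; omega

lemma bIdx_coarsen {n m j : ℕ} (hn : 0 < n) (hj : j + 1 ≤ 2 * m) {z w : Fin 2 → ZMod n}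
    (h : bIdx n m j w = bIdx n m j z) : bIdx n m (j + 1) w = bIdx n m (j + 1) z := by
  simp only [bIdx, Prod.mk.injEq] at h ⊢
  rcases Nat.even_or_odd j with he | ho
  · obtain ⟨k, hk⟩ := he
    have hp1 : pdep m (j + 1) + 1 = pdep m j := by rw [pdep, pdep]; omega
    have hq1 : qdep m (j + 1) = qdep m j := by rw [qdep, qdep]; omega
    constructor
    · have cw := idx_coarsen hn (pdep m (j + 1)) (w 0).val
      have cz := idx_coarsen hn (pdep m (j + 1)) (z 0).val
      rw [hp1] at cw cz
      rw [cw, cz, h.1]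
    · rw [hq1]; exact h.2
  · obtain ⟨k, hk⟩ := ho
    have hp1 : pdep m (j + 1) = pdep m j := by rw [pdep, pdep]; omega
    have hq1 : qdep m (j + 1) + 1 = qdep m j := by rw [qdep, qdep]; omega
    constructor
    · rw [hp1]; exact h.1
    · have cw := idx_coarsen hn (qdep m (j + 1)) (w 1).val
      have cz := idx_coarsen hn (qdep m (j + 1)) (z 1).val
      rw [hq1] at cw cz
      rw [cw, cz, h.2]

/-- no points are removed when passing to an odd level -/
lemma S_odd_eq {n r m : ℕ} (hn : 0 < n) (A : Finset (Fin 2 → ZMod n)) (k : ℕ)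
    (hk : 2 * k + 1 ≤ 2 * m) :
    S n r m A (2 * k + 1) = S n r m A (2 * k) := by
  show step n r m (2 * k + 1) (S n r m A (2 * k)) = S n r m A (2 * k)
  apply Finset.Subset.antisymm step_subset
  intro z hz
  apply mem_step.mpr
  refine ⟨hz, ?_⟩
  have hsub : fib n m (2 * k) (S n r m A (2 * k)) (bIdx n m (2 * k) z) ⊆
      fib n m (2 * k + 1) (S n r m A (2 * k)) (bIdx n m (2 * k + 1) z) := by
    intro w hw
    obtain ⟨hw1, hw2⟩ := mem_fib.mp hw
    exact mem_fib.mpr ⟨hw1, bIdx_coarsen hn hk hw2⟩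
  have hcard := S_fib_card A (2 * k) hz
  have hth : theta r (2 * k + 1) = theta r (2 * k) := by
    rw [theta, theta]
    congr 2
    omega
  rw [hth]
  exact le_trans hcard (Finset.card_le_card hsub)
lemma torusDist_le' {d n : ℕ} [NeZero n] {x y : Fin d → ZMod n} {s : ℕ}
    (h : ∀ i, (x i).val ≤ (y i).val + s ∧ (y i).val ≤ (x i).val + s) :
    torusDist x y ≤ s := by
  have hmem : (Finset.univ.sup fun i => (((x i).val : ℤ) - ((y i).val : ℤ)).natAbs) ∈
      {k : ℕ | ∃ a b : Fin d → ℤ,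
        (∀ i, (a i : ZMod n) = x i) ∧ (∀ i, (b i : ZMod n) = y i) ∧
        (Finset.univ.sup fun i => (a i - b i).natAbs) = k} := by
    refine ⟨fun i => ((x i).val : ℤ), fun i => ((y i).val : ℤ), fun i => ?_, fun i => ?_, rfl⟩
    · push_cast
      exact ZMod.natCast_rightInverse (x i)
    · push_cast
      exact ZMod.natCast_rightInverse (y i)
  refine le_trans (Nat.sInf_le hmem) (Finset.sup_le fun i _ => ?_)
  have := h i
  omega

lemma torusDiam_le' {d n : ℕ} {C : Set (Fin d → ZMod n)} {s : ℕ}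
    (h : ∀ x ∈ C, ∀ y ∈ C, torusDist x y ≤ s) : torusDiam C ≤ s := by
  apply csSup_le'
  rintro k ⟨x, hx, y, hy, rfl⟩
  exact h x hx y hy

lemma val_diff {n r m i' : ℕ} (hn : 0 < n) (hnu : n < 4 * r * 2 ^ m) (hi : i' ≤ m)
    {v v' : ℕ} (hv : idx n i' v = idx n i' v') :
    v ≤ v' + (4 * r * 2 ^ (m - i') - 1) ∧ v' ≤ v + (4 * r * 2 ^ (m - i') - 1) := by
  have b1 := idx_spec hn i' v
  have b2 := idx_spec hn i' v'
  rw [hv] at b1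
  have up := E_len_upper (r := r) hnu hi (idx n i' v')
  omega

lemma dist_of_same_box {n r m j : ℕ} [NeZero n] (hnu : n < 4 * r * 2 ^ m) (hj : j ≤ 2 * m)
    {z w : Fin 2 → ZMod n} (h : bIdx n m j z = bIdx n m j w) :
    torusDist z w ≤ 4 * r * 2 ^ ((j + 1) / 2) - 1 := by
  have hn : 0 < n := Nat.pos_of_ne_zero (NeZero.ne n)
  simp only [bIdx, Prod.mk.injEq] at h
  have hp : pdep m j ≤ m := Nat.sub_le _ _
  have hq : qdep m j ≤ m := Nat.sub_le _ _
  have d0 := val_diff hn hnu hp h.1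
  have d1 := val_diff hn hnu hq h.2
  rw [pdep_eq hj] at d0
  rw [qdep_eq hj] at d1
  have hmono : 4 * r * 2 ^ (j / 2) ≤ 4 * r * 2 ^ ((j + 1) / 2) :=
    Nat.mul_le_mul_left _ (Nat.pow_le_pow_right (by norm_num) (by omega))
  apply torusDist_le'
  refine Fin.forall_fin_two.mpr ⟨?_, ?_⟩
  · exact ⟨by have := d0.1; omega, by have := d0.2; omega⟩
  · exact ⟨by have := d1.1; omega, by have := d1.2; omega⟩

lemma S_mono {n r m : ℕ} (A : Finset (Fin 2 → ZMod n)) {j j' : ℕ} (h : j ≤ j') :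
    S n r m A j' ⊆ S n r m A j := by
  induction j' with
  | zero => rw [Nat.le_zero.mp h]
  | succ i ih =>
      rcases Nat.lt_or_ge j (i + 1) with hlt | hge
      · exact (S_succ_subset A i).trans (ih (by omega))
      · rw [Nat.le_antisymm h hge]

lemma sdiff_card_split {n : ℕ} {A T T' : Finset (Fin 2 → ZMod n)}
    (h1 : T' ⊆ T) (h2 : T ⊆ A) :
    (A \ T').card = (A \ T).card + (T \ T').card := by
  rw [← Finset.card_union_of_disjoint]
  · congr 1
    ext w
    simp only [Finset.mem_sdiff, Finset.mem_union]
    constructor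
    · intro ⟨hwA, hwT'⟩
      by_cases hwT : w ∈ T
      · exact Or.inr ⟨hwT, hwT'⟩
      · exact Or.inl ⟨hwA, hwT⟩
    · rintro (⟨hwA, hwT⟩ | ⟨hwT, hwT'⟩)
      · exact ⟨hwA, fun hc => hwT (h1 hc)⟩
      · exact ⟨h2 hwT, hwT'⟩
  · rw [Finset.disjoint_left]
    intro w hw hw'
    rw [Finset.mem_sdiff] at hw hw'
    exact hw.2 hw'.1

lemma telescope_card {n r m : ℕ} (A : Finset (Fin 2 → ZMod n)) (J : ℕ) :
    (A \ S n r m A J).card =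
      (A \ S n r m A 0).card +
        ∑ i ∈ Finset.range J, (S n r m A i \ S n r m A (i + 1)).card := by
  induction J with
  | zero => simp
  | succ J ih =>
      rw [Finset.sum_range_succ, ← add_assoc, ← ih]
      exact sdiff_card_split (S_succ_subset A J) (S_subset_A A J)

lemma sum_filter_card_le {n : ℕ} (I : Finset (ℕ × ℕ)) (P : Finset (Fin 2 → ZMod n))
    (g : (Fin 2 → ZMod n) → ℕ × ℕ) :
    ∑ c ∈ I, (P.filter fun w => g w = c).card ≤ P.card := by
  rw [← Finset.card_biUnion]
  · apply Finset.card_le_card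
    intro w hw
    obtain ⟨c, _, hc⟩ := Finset.mem_biUnion.mp hw
    exact (Finset.mem_filter.mp hc).1
  · intro c _ c' _ hcc
    simp only [Function.onFun]
    rw [Finset.disjoint_left]
    intro w hw hw'
    rw [Finset.mem_filter] at hw hw'
    exact hcc (hw.2 ▸ hw'.2)

lemma even_removed_bound {n r m : ℕ} [NeZero n] (hnl : 2 * r * 2 ^ m ≤ n) (hr : 1 ≤ r)
    {A : Finset (Fin 2 → ZMod n)} (k : ℕ) (hk : 2 * k ≤ 2 * m)
    {T : Finset (Fin 2 → ZMod n)} (hTA : T ⊆ A) :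
    (2 ^ (k + 2) - 1) * (T \ step n r m (2 * k) T).card ≤
      (Finset.univ \ A).card + (A \ T).card := by
  classical
  set R := T \ step n r m (2 * k) T with hR
  have hth : theta r (2 * k) = 2 ^ k * r ^ 2 := by
    rw [theta]
    congr 2
    omega
  -- badness of the fibers of removed points
  have hbad : ∀ z ∈ R, (fib n m (2 * k) T (bIdx n m (2 * k) z)).card < 2 ^ k * r ^ 2 := by
    intro z hz
    rw [hR, Finset.mem_sdiff] at hz
    by_contra hc
    push_neg at hc
    exact hz.2 (mem_step.mpr ⟨hz.1, by rw [hth]; exact hc⟩)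
  have hcard := Finset.card_eq_sum_card_image (bIdx n m (2 * k)) R
  -- per-box inequality
  have hper : ∀ c ∈ R.image (bIdx n m (2 * k)),
      (2 ^ (k + 2) - 1) * (R.filter fun w => bIdx n m (2 * k) w = c).card ≤
        ((Finset.univ \ A).filter fun w => bIdx n m (2 * k) w = c).card +
          ((A \ T).filter fun w => bIdx n m (2 * k) w = c).card := by
    intro c hc
    obtain ⟨z, hzR, hzc⟩ := Finset.mem_image.mp hc
    have hzbad := hbad z hzR
    rw [hzc] at hzbad
    -- removed fiber equals the full fiber of T
    have hfibR : (R.filter fun w => bIdx n m (2 * k) w = c) = fib n m (2 * k) T c := by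
      ext w
      rw [Finset.mem_filter, mem_fib, hR, Finset.mem_sdiff]
      constructor
      · rintro ⟨⟨h1, _⟩, h3⟩
        exact ⟨h1, h3⟩
      · rintro ⟨h1, h3⟩
        refine ⟨⟨h1, fun hs => ?_⟩, h3⟩
        have := (mem_step.mp hs).2
        rw [h3, hth] at this
        omega
    rw [hfibR]
    -- the full box
    have hbox := box_card_lower (r := r) hnl hk z
    rw [hzc] at hbox
    -- splitting of the box
    have hsplit : ((Finset.univ.filter fun w : Fin 2 → ZMod n => bIdx n m (2 * k) w = c)).card =
        ((Finset.univ \ A).filter fun w => bIdx n m (2 * k) w = c).card +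
          (((A \ T).filter fun w => bIdx n m (2 * k) w = c).card + (fib n m (2 * k) T c).card) := by
      rw [← Finset.card_union_of_disjoint, ← Finset.card_union_of_disjoint]
      · congr 1
        ext w
        simp only [Finset.mem_filter, Finset.mem_union, Finset.mem_sdiff, Finset.mem_univ,
          true_and, mem_fib]
        constructor
        · intro hw
          by_cases hwT : w ∈ T
          · exact Or.inr (Or.inr ⟨hwT, hw⟩)
          · by_cases hwA : w ∈ A
            · exact Or.inr (Or.inl ⟨⟨hwA, hwT⟩, hw⟩)
            · exact Or.inl ⟨hwA, hw⟩
        · rintro (⟨_, hw⟩ | ⟨⟨_, _⟩, hw⟩ | ⟨_, hw⟩) <;> exact hw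
      · rw [Finset.disjoint_left]
        intro w hw hw'
        rw [Finset.mem_filter, Finset.mem_sdiff] at hw
        rw [Finset.mem_union, Finset.mem_filter, Finset.mem_sdiff, mem_fib] at hw'
        rcases hw' with ⟨⟨hwA, _⟩, _⟩ | ⟨hwT, _⟩
        · exact hw.1.2 hwA
        · exact hw.1.2 (hTA hwT)
      · rw [Finset.disjoint_left]
        intro w hw hw'
        rw [Finset.mem_filter, Finset.mem_sdiff] at hw
        rw [mem_fib] at hw'
        exact hw.1.2 hw'.1
    -- arithmetic
    have key : 2 ^ (k + 2) * (2 ^ k * r ^ 2) = 4 * r ^ 2 * 2 ^ (2 * k) := by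
      rw [show 2 ^ (k + 2) * (2 ^ k * r ^ 2) = (2 ^ (k + 2) * 2 ^ k) * r ^ 2 by ring,
        ← pow_add, show k + 2 + k = 2 * k + 2 by omega, pow_add]
      ring
    have hF := hzbad
    have hmul : 2 ^ (k + 2) * (fib n m (2 * k) T c).card ≤
        2 ^ (k + 2) * (2 ^ k * r ^ 2) := Nat.mul_le_mul_left _ (le_of_lt hF)
    have hexp : (2 ^ (k + 2) - 1) * (fib n m (2 * k) T c).card =
        2 ^ (k + 2) * (fib n m (2 * k) T c).card - 1 * (fib n m (2 * k) T c).card := by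
      rw [← Nat.sub_mul]
    rw [one_mul] at hexp
    omega
  calc (2 ^ (k + 2) - 1) * R.card
      = ∑ c ∈ R.image (bIdx n m (2 * k)),
          (2 ^ (k + 2) - 1) * (R.filter fun w => bIdx n m (2 * k) w = c).card := by
        rw [← Finset.mul_sum, ← hcard]
    _ ≤ ∑ c ∈ R.image (bIdx n m (2 * k)),
          (((Finset.univ \ A).filter fun w => bIdx n m (2 * k) w = c).card +
            ((A \ T).filter fun w => bIdx n m (2 * k) w = c).card) :=
        Finset.sum_le_sum hper
    _ = (∑ c ∈ R.image (bIdx n m (2 * k)),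
          ((Finset.univ \ A).filter fun w => bIdx n m (2 * k) w = c).card) +
        ∑ c ∈ R.image (bIdx n m (2 * k)),
          ((A \ T).filter fun w => bIdx n m (2 * k) w = c).card := Finset.sum_add_distrib
    _ ≤ (Finset.univ \ A).card + (A \ T).card :=
        Nat.add_le_add (sum_filter_card_le _ _ _) (sum_filter_card_le _ _ _)


/-- the partition at level `j` -/
def partSet (n r m : ℕ) (A : Finset (Fin 2 → ZMod n)) (j : ℕ) : Set (Set (Fin 2 → ZMod n)) :=
  {C | ∃ z ∈ S n r m A j, C = ↑(fib n m j (S n r m A j) (bIdx n m j z))}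

lemma partSet_isPartition (n r m : ℕ) (A : Finset (Fin 2 → ZMod n)) (j : ℕ) :
    IsPartitionOf (partSet n r m A j) ↑(S n r m A j) := by
  refine ⟨?_, ?_, ?_⟩
  · rintro C ⟨z, hz, rfl⟩
    exact ⟨z, Finset.mem_coe.mpr (mem_fib.mpr ⟨hz, rfl⟩)⟩
  · ext w
    simp only [Set.mem_sUnion]
    constructor
    · rintro ⟨C, ⟨z, hz, rfl⟩, hwC⟩
      exact Finset.mem_coe.mpr ((mem_fib.mp (Finset.mem_coe.mp hwC)).1)
    · intro hw
      have hw' := Finset.mem_coe.mp hw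
      exact ⟨↑(fib n m j (S n r m A j) (bIdx n m j w)), ⟨w, hw', rfl⟩,
        Finset.mem_coe.mpr (mem_fib.mpr ⟨hw', rfl⟩)⟩
  · rintro C ⟨z, hz, rfl⟩ C' ⟨z', hz', rfl⟩ hne
    rw [Set.disjoint_left]
    intro w hwC hwC'
    have h1 := mem_fib.mp (Finset.mem_coe.mp hwC)
    have h2 := mem_fib.mp (Finset.mem_coe.mp hwC')
    have heq : bIdx n m j z = bIdx n m j z' := by rw [← h1.2, h2.2]
    exact hne (by rw [heq])

lemma partSet_card {n r m j : ℕ} {A : Finset (Fin 2 → ZMod n)} {C : Set (Fin 2 → ZMod n)}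
    (hC : C ∈ partSet n r m A j) : theta r j ≤ C.ncard := by
  obtain ⟨z, hz, rfl⟩ := hC
  rw [Set.ncard_coe_finset]
  exact S_fib_card A j hz

lemma partSet_dist {n r m j : ℕ} [NeZero n] (hnu : n < 4 * r * 2 ^ m) (hj : j ≤ 2 * m)
    {A : Finset (Fin 2 → ZMod n)} {C : Set (Fin 2 → ZMod n)} (hC : C ∈ partSet n r m A j) :
    ∀ x ∈ C, ∀ y ∈ C, torusDist x y ≤ 4 * r * 2 ^ ((j + 1) / 2) - 1 := by
  obtain ⟨z, hz, rfl⟩ := hC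
  intro x hx y hy
  have h1 := (mem_fib.mp (Finset.mem_coe.mp hx)).2
  have h2 := (mem_fib.mp (Finset.mem_coe.mp hy)).2
  exact dist_of_same_box hnu hj (h1.trans h2.symm)

lemma partSet_merge {n r m j : ℕ} (hn : 0 < n) (hj : j + 1 ≤ 2 * m)
    (A : Finset (Fin 2 → ZMod n)) {C : Set (Fin 2 → ZMod n)}
    (hC : C ∈ partSet n r m A (j + 1)) (hCn : C ∉ partSet n r m A j) :
    ∃ C₀ ∈ partSet n r m A j, ∃ C₁ ∈ partSet n r m A j, C = C₀ ∪ C₁ := by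
  obtain ⟨z, hz, rfl⟩ := hC
  set c := bIdx n m (j + 1) z with hc
  have hstep : S n r m A (j + 1) = step n r m (j + 1) (S n r m A j) := rfl
  have heq : fib n m (j + 1) (S n r m A (j + 1)) c = fib n m (j + 1) (S n r m A j) c := by
    rw [hstep]
    exact (step_fib_large (hstep ▸ hz)).1
  -- the two level-j box indices
  obtain ⟨c₀, c₁, hiff⟩ :
      ∃ c₀ c₁ : ℕ × ℕ, (∀ w : Fin 2 → ZMod n,
        bIdx n m (j + 1) w = c ↔ (bIdx n m j w = c₀ ∨ bIdx n m j w = c₁)) ∧ c₀ ≠ c₁ := by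
    rcases Nat.even_or_odd j with he | ho
    · obtain ⟨k, hk⟩ := he
      have hp1 : pdep m (j + 1) + 1 = pdep m j := by rw [pdep, pdep]; omega
      have hq1 : qdep m (j + 1) = qdep m j := by rw [qdep, qdep]; omega
      refine ⟨(2 * c.1, c.2), (2 * c.1 + 1, c.2), fun w => ?_, by simp⟩
      have cw := idx_coarsen hn (pdep m (j + 1)) (w 0).val
      rw [hp1] at cw
      simp only [bIdx, Prod.ext_iff, cw, hq1, Prod.fst, Prod.snd]
      constructor
      · rintro ⟨hw1, hw2⟩
        rcases Nat.lt_or_ge (idx n (pdep m j) (w 0).val) (2 * c.1 + 1) with h | h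
        · exact Or.inl ⟨by omega, hw2⟩
        · exact Or.inr ⟨by omega, hw2⟩
      · rintro (⟨hw1, hw2⟩ | ⟨hw1, hw2⟩) <;> exact ⟨by omega, hw2⟩
    · obtain ⟨k, hk⟩ := ho
      have hp1 : pdep m (j + 1) = pdep m j := by rw [pdep, pdep]; omega
      have hq1 : qdep m (j + 1) + 1 = qdep m j := by rw [qdep, qdep]; omega
      refine ⟨(c.1, 2 * c.2), (c.1, 2 * c.2 + 1), fun w => ?_, by simp⟩
      have cw := idx_coarsen hn (qdep m (j + 1)) (w 1).val
      rw [hq1] at cw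
      simp only [bIdx, Prod.ext_iff, cw, hp1, Prod.fst, Prod.snd]
      constructor
      · rintro ⟨hw1, hw2⟩
        rcases Nat.lt_or_ge (idx n (qdep m j) (w 1).val) (2 * c.2 + 1) with h | h
        · exact Or.inl ⟨hw1, by omega⟩
        · exact Or.inr ⟨hw1, by omega⟩
      · rintro (⟨hw1, hw2⟩ | ⟨hw1, hw2⟩) <;> exact ⟨hw1, by omega⟩
  obtain ⟨hiff, hc01⟩ := hiff
  have hsplit : fib n m (j + 1) (S n r m A j) c =
      fib n m j (S n r m A j) c₀ ∪ fib n m j (S n r m A j) c₁ := by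
    ext w
    rw [Finset.mem_union, mem_fib, mem_fib, mem_fib]
    constructor
    · rintro ⟨hw1, hw2⟩
      rcases (hiff w).mp hw2 with h | h
      · exact Or.inl ⟨hw1, h⟩
      · exact Or.inr ⟨hw1, h⟩
    · rintro (⟨hw1, hw2⟩ | ⟨hw1, hw2⟩) <;> exact ⟨hw1, (hiff w).mpr (by tauto)⟩
  -- nonemptiness cases
  by_cases h0 : (fib n m j (S n r m A j) c₀).Nonempty
  · by_cases h1 : (fib n m j (S n r m A j) c₁).Nonempty
    · obtain ⟨z₀, hz₀⟩ := h0
      obtain ⟨z₁, hz₁⟩ := h1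
      refine ⟨↑(fib n m j (S n r m A j) c₀), ⟨z₀, (mem_fib.mp hz₀).1, by rw [(mem_fib.mp hz₀).2]⟩,
        ↑(fib n m j (S n r m A j) c₁), ⟨z₁, (mem_fib.mp hz₁).1, by rw [(mem_fib.mp hz₁).2]⟩, ?_⟩
      rw [heq, hsplit, Finset.coe_union]
    · exfalso
      apply hCn
      rw [Finset.not_nonempty_iff_eq_empty] at h1
      have hCeq : fib n m (j + 1) (S n r m A (j + 1)) c = fib n m j (S n r m A j) c₀ := by
        rw [heq, hsplit, h1, Finset.union_empty]
      have hzc : z ∈ fib n m j (S n r m A j) c₀ := by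
        rw [← hCeq]
        exact mem_fib.mpr ⟨hz, rfl⟩
      exact ⟨z, (mem_fib.mp hzc).1, by rw [hCeq, (mem_fib.mp hzc).2]⟩
  · exfalso
    apply hCn
    rw [Finset.not_nonempty_iff_eq_empty] at h0
    have hCeq : fib n m (j + 1) (S n r m A (j + 1)) c = fib n m j (S n r m A j) c₁ := by
      rw [heq, hsplit, h0, Finset.empty_union]
    have hzc : z ∈ fib n m j (S n r m A j) c₁ := by
      rw [← hCeq]
      exact mem_fib.mpr ⟨hz, rfl⟩
    exact ⟨z, (mem_fib.mp hzc).1, by rw [hCeq, (mem_fib.mp hzc).2]⟩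

lemma bIdx_top {n m : ℕ} (hn : 0 < n) [NeZero n] (w : Fin 2 → ZMod n) :
    bIdx n m (2 * m) w = (0, 0) := by
  have hp : pdep m (2 * m) = 0 := by rw [pdep]; omega
  have hq : qdep m (2 * m) = 0 := by rw [qdep]; omega
  have hidx : ∀ v : ℕ, v < n → idx n 0 v = 0 := by
    intro v hv
    rw [idx, pow_zero, one_mul]
    simp only [Nat.add_sub_cancel]
    exact Nat.div_eq_of_lt hv
  rw [bIdx, hp, hq, hidx _ (ZMod.val_lt _), hidx _ (ZMod.val_lt _)]

lemma partSet_final {n r m : ℕ} (hn : 0 < n) [NeZero n] (A : Finset (Fin 2 → ZMod n))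
    (hA : (S n r m A (2 * m)).Nonempty) :
    partSet n r m A (2 * m) = {(↑(S n r m A (2 * m)) : Set (Fin 2 → ZMod n))} := by
  have hfib : ∀ z : Fin 2 → ZMod n,
      fib n m (2 * m) (S n r m A (2 * m)) (bIdx n m (2 * m) z) = S n r m A (2 * m) := by
    intro z
    rw [bIdx_top hn]
    apply Finset.filter_true_of_mem
    intro w _
    rw [bIdx_top hn]
  ext C
  simp only [Set.mem_singleton_iff]
  constructor
  · rintro ⟨z, hz, rfl⟩
    rw [hfib]
  · rintro rfl
    obtain ⟨z, hz⟩ := hA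
    exact ⟨z, hz, by rw [hfib]⟩

lemma exists_m (r : ℕ) (hr : 1 ≤ r) : ∀ n, 2 * r ≤ n → ∃ m, 2 * r * 2 ^ m ≤ n ∧ n < 4 * r * 2 ^ m := by
  intro n
  induction n using Nat.strong_induction_on with
  | _ n ih =>
    intro hn
    rcases lt_or_ge n (4 * r) with h | h
    · exact ⟨0, by simpa using hn, by simpa using h⟩
    · have hn2 : 2 * r ≤ n / 2 := by omega
      obtain ⟨m, h1, h2⟩ := ih (n / 2) (by omega) hn2
      refine ⟨m + 1, ?_, ?_⟩
      · have e : 2 * r * 2 ^ (m + 1) = 2 * (2 * r * 2 ^ m) := by ring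
        omega
      · have e : 4 * r * 2 ^ (m + 1) = 2 * (4 * r * 2 ^ m) := by ring
        omega

lemma sum_pair (f : ℕ → ℝ) (M : ℕ) :
    ∑ i ∈ Finset.range (2 * M), f i = ∑ k ∈ Finset.range M, (f (2 * k) + f (2 * k + 1)) := by
  induction M with
  | zero => simp
  | succ M ih =>
      have e : 2 * (M + 1) = (2 * M) + 1 + 1 := by ring
      rw [e, Finset.sum_range_succ, Finset.sum_range_succ, ih, Finset.sum_range_succ]
      ring

lemma diam_arith {r : ℕ} (hr : 1 ≤ r) (j : ℕ) :
    4 * r * 2 ^ ((j + 2) / 2) - 1 ≤ 6 ^ j * 96 * r ^ 3 := by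
  have h2 : (2:ℕ) ^ ((j + 2) / 2) ≤ 2 ^ (j + 1) :=
    Nat.pow_le_pow_right (by norm_num) (by omega)
  have h3 : (2:ℕ) ^ j ≤ 6 ^ j := Nat.pow_le_pow_left (by norm_num) j
  have h4 : r ≤ r ^ 3 := Nat.le_self_pow (by norm_num) r
  have c1 : 4 * r * 2 ^ ((j + 2) / 2) ≤ 4 * r * 2 ^ (j + 1) := Nat.mul_le_mul_left _ h2
  have c2 : 4 * r * 2 ^ (j + 1) = 8 * r * 2 ^ j := by rw [pow_succ]; ring
  have c3 : 8 * r * 2 ^ j ≤ 8 * r ^ 3 * 6 ^ j :=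
    Nat.mul_le_mul (Nat.mul_le_mul_left 8 h4) h3
  have c4 : 8 * r ^ 3 * 6 ^ j ≤ 6 ^ j * 96 * r ^ 3 := by
    rw [show 6 ^ j * 96 * r ^ 3 = 96 * r ^ 3 * 6 ^ j by ring]
    exact Nat.mul_le_mul_right _ (by omega)
  omega

end DormHelper

/-- **Dormitory hierarchy with dense clusters at level 0 (high sleep rate, `d = 2`).**
Let `r ≥ 1` and `D j = 6^j · 96 r³`.  For all sufficiently large `n`, for every
`A ⊆ (ℤ/nℤ)²` with `|A| ≥ n²/2`, there exists an `(r², D)`-dormitory hierarchy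
`(A_j, 𝒞_j)_{j ≤ J}` on `A` with `|A_J| ≥ |A| − n²/2`, in which every cluster
`C ∈ 𝒞₀` is `8r`-connected and satisfies `|C ∩ B(x, 4r)| ≥ r²` for every `x ∈ C`. -/
theorem dormitory_hierarchy_dense_clusters
    (r : ℕ) (hr : 1 ≤ r) (D : ℕ → ℕ) (hD : ∀ j, D j = 6 ^ j * 96 * r ^ 3) :
    ∃ n₀ : ℕ, ∀ n, n₀ ≤ n → ∀ A : Set (Fin 2 → ZMod n),
      (n : ℝ) ^ 2 / 2 ≤ (A.ncard : ℝ) →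
      ∃ H : DormitoryHierarchy 2 n (r ^ 2) D A,
        (A.ncard : ℝ) - (n : ℝ) ^ 2 / 2 ≤ ((H.level H.J).ncard : ℝ) ∧
        ∀ C ∈ H.part 0, torusRConnected (8 * r) C ∧
          ∀ x ∈ C, r ^ 2 ≤ (C ∩ torusBall x (4 * r)).ncard := by
  classical
  refine ⟨16 * r + 16, fun n hn A hA => ?_⟩
  have hn1 : 0 < n := by omega
  haveI : NeZero n := ⟨by omega⟩
  obtain ⟨m, hml, hmu⟩ := DormHelper.exists_m r hr n (by omega)
  have hAfin : A.Finite := Set.toFinite A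
  set A' := hAfin.toFinset with hA'def
  have hcoe : (↑A' : Set (Fin 2 → ZMod n)) = A := hAfin.coe_toFinset
  have hancard : A.ncard = A'.card := Set.ncard_eq_toFinset_card A hAfin
  set J := 2 * m with hJdef
  -- counting set-up
  set X := (Finset.univ \ A').card with hXdef
  set Tt := (A' \ DormHelper.S n r m A' J).card with hTtdef
  have hcardV : Fintype.card (Fin 2 → ZMod n) = n ^ 2 := by
    rw [Fintype.card_fun]
    simp [ZMod.card]
  have hXa : X + A'.card = n ^ 2 := by
    rw [hXdef, Finset.card_sdiff_of_subset (Finset.subset_univ _), Finset.card_univ, hcardV]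
    have h := Finset.card_le_univ A'
    rw [hcardV] at h
    omega
  have h2a : n ^ 2 ≤ 2 * A'.card := by
    have h1 : ((n : ℝ)) ^ 2 ≤ 2 * (A'.card : ℝ) := by
      rw [← hancard] at *
      linarith
    exact_mod_cast h1
  -- removal bound at level 0
  have h3R0 : 3 * (A' \ DormHelper.S n r m A' 0).card ≤ X := by
    have h := DormHelper.even_removed_bound (r := r) (m := m) (A := A') (T := A')
      hml hr 0 (by omega) (le_refl A')
    simp only [Nat.mul_zero, Finset.sdiff_self, Finset.card_empty, Nat.add_zero] at h
    calc 3 * (A' \ DormHelper.S n r m A' 0).card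
        = (2 ^ (0 + 2) - 1) * (A' \ DormHelper.step n r m 0 A').card := by norm_num; rfl
      _ ≤ X := h
  -- telescoping
  have tel := DormHelper.telescope_card (n := n) (r := r) (m := m) A' J
  -- even levels: no removal
  have hDeven : ∀ k, 2 * k < J → (DormHelper.S n r m A' (2 * k) \
      DormHelper.S n r m A' (2 * k + 1)).card = 0 := by
    intro k hk
    rw [DormHelper.S_odd_eq hn1 A' k (by omega), Finset.sdiff_self, Finset.card_empty]
  -- odd levels: removal bound
  have hDodd : ∀ k, 2 * k + 1 < J → 7 * 2 ^ k * (DormHelper.S n r m A' (2 * k + 1) \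
      DormHelper.S n r m A' (2 * k + 1 + 1)).card ≤ X + Tt := by
    intro k hk
    have h := DormHelper.even_removed_bound (r := r) (m := m) (A := A')
      (T := DormHelper.S n r m A' (2 * k + 1)) hml hr (k + 1) (by omega)
      (DormHelper.S_subset_A A' (2 * k + 1))
    have hstep : DormHelper.S n r m A' (2 * k + 1) \
        DormHelper.step n r m (2 * (k + 1)) (DormHelper.S n r m A' (2 * k + 1)) =
        DormHelper.S n r m A' (2 * k + 1) \ DormHelper.S n r m A' (2 * k + 1 + 1) := by
      have e : 2 * (k + 1) = 2 * k + 1 + 1 := by ring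
      rw [e]
      rfl
    rw [hstep] at h
    have hsub : (A' \ DormHelper.S n r m A' (2 * k + 1)).card ≤ Tt := by
      apply Finset.card_le_card
      apply Finset.sdiff_subset_sdiff (le_refl A')
      exact DormHelper.S_mono A' (by omega)
    have hco : 7 * 2 ^ k ≤ 2 ^ (k + 1 + 2) - 1 := by
      have e : (2:ℕ) ^ (k + 1 + 2) = 8 * 2 ^ k := by rw [show k + 1 + 2 = k + 3 by ring, pow_add]; ring
      have : (1:ℕ) ≤ 2 ^ k := Nat.one_le_two_pow
      omega
    calc 7 * 2 ^ k * (DormHelper.S n r m A' (2 * k + 1) \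
          DormHelper.S n r m A' (2 * k + 1 + 1)).card
        ≤ (2 ^ (k + 1 + 2) - 1) * (DormHelper.S n r m A' (2 * k + 1) \
          DormHelper.S n r m A' (2 * k + 1 + 1)).card := Nat.mul_le_mul_right _ hco
      _ ≤ X + (A' \ DormHelper.S n r m A' (2 * k + 1)).card := h
      _ ≤ X + Tt := by omega
  -- real arithmetic
  have hTt13 : 15 * (Tt : ℝ) ≤ 13 * (X : ℝ) := by
    have htel : (Tt : ℝ) = ((A' \ DormHelper.S n r m A' 0).card : ℝ) +
        ∑ i ∈ Finset.range J, ((DormHelper.S n r m A' i \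
          DormHelper.S n r m A' (i + 1)).card : ℝ) := by
      rw [hTtdef, tel]
      push_cast
      ring
    have hsum : ∑ i ∈ Finset.range J, ((DormHelper.S n r m A' i \
        DormHelper.S n r m A' (i + 1)).card : ℝ) ≤ ((X : ℝ) + Tt) * (2 / 7) := by
      rw [hJdef, DormHelper.sum_pair]
      have hXT : (0 : ℝ) ≤ (X : ℝ) + Tt := by positivity
      calc ∑ k ∈ Finset.range m, (((DormHelper.S n r m A' (2 * k) \
              DormHelper.S n r m A' (2 * k + 1)).card : ℝ) +
            ((DormHelper.S n r m A' (2 * k + 1) \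
              DormHelper.S n r m A' (2 * k + 1 + 1)).card : ℝ))
          ≤ ∑ k ∈ Finset.range m, ((X : ℝ) + Tt) * (1 / 7) * (1 / 2) ^ k := by
            apply Finset.sum_le_sum
            intro k hk
            have hkm := Finset.mem_range.mp hk
            have he : ((DormHelper.S n r m A' (2 * k) \
                DormHelper.S n r m A' (2 * k + 1)).card : ℝ) = 0 := by
              rw [hDeven k (by omega)]
              norm_num
            have ho := hDodd k (by omega)
            have hpos : (0 : ℝ) < 7 * 2 ^ k := by positivity
            have hoR : ((DormHelper.S n r m A' (2 * k + 1) \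
                DormHelper.S n r m A' (2 * k + 1 + 1)).card : ℝ) * (7 * 2 ^ k) ≤ (X : ℝ) + Tt := by
              have := (Nat.cast_le (α := ℝ)).mpr ho
              push_cast at this
              linarith
            have heq : ((X : ℝ) + Tt) * (1 / 7) * (1 / 2) ^ k = ((X : ℝ) + Tt) / (7 * 2 ^ k) := by
              rw [one_div_pow]
              field_simp
            rw [he, zero_add, heq, le_div_iff₀ hpos]
            exact hoR
        _ = ((X : ℝ) + Tt) * (1 / 7) * ∑ k ∈ Finset.range m, (1 / 2 : ℝ) ^ k := by
            rw [← Finset.mul_sum]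
        _ ≤ ((X : ℝ) + Tt) * (1 / 7) * 2 := by
            apply mul_le_mul_of_nonneg_left (sum_geometric_two_le m) (by positivity)
        _ = ((X : ℝ) + Tt) * (2 / 7) := by ring
    have hR0 : 3 * (((A' \ DormHelper.S n r m A' 0).card : ℝ)) ≤ (X : ℝ) := by
      exact_mod_cast h3R0
    linarith
  have hScard : (DormHelper.S n r m A' J).card + Tt = A'.card := by
    rw [hTtdef, add_comm]
    exact Finset.card_sdiff_add_card_eq_card (DormHelper.S_subset_A A' J)
  have hX2 : 2 * X ≤ n ^ 2 := by omega
  have hSnonempty : (DormHelper.S n r m A' J).Nonempty := by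
    rw [← Finset.card_pos]
    by_contra hc
    push_neg at hc
    have hc0 : (DormHelper.S n r m A' J).card = 0 := by omega
    rw [hc0, zero_add] at hScard
    -- Tt = A'.card, 15 Tt ≤ 13 X, X + Tt = n², n² ≤ 2 Tt: contradiction
    have hn2 : 0 < n ^ 2 := by positivity
    have : (15 : ℝ) * Tt ≤ 13 * X := hTt13
    have hX' : (X : ℝ) + Tt = (n : ℝ) ^ 2 := by
      rw [← hScard] at hXa
      exact_mod_cast hXa
    have h2a' : ((n : ℝ)) ^ 2 ≤ 2 * (Tt : ℝ) := by
      rw [← hScard] at h2a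
      exact_mod_cast h2a
    have hnR : (0 : ℝ) < (n : ℝ) ^ 2 := by positivity
    linarith
  -- the hierarchy
  refine ⟨⟨J, fun j => ↑(DormHelper.S n r m A' j), fun j => DormHelper.partSet n r m A' j,
    ?_, ?_, ?_, ?_, ?_, ?_⟩, ?_, ?_⟩
  · -- level 0 ⊆ A
    intro x hx
    rw [← hcoe]
    exact Finset.mem_coe.mpr (DormHelper.S_subset_A A' 0 (Finset.mem_coe.mp hx))
  · -- antitone
    intro j _
    exact Finset.coe_subset.mpr (DormHelper.S_succ_subset A' j)
  · -- partitions
    intro j _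
    exact DormHelper.partSet_isPartition n r m A' j
  · -- cardinality
    intro j _ C hC
    have := DormHelper.partSet_card hC
    simpa [DormHelper.theta] using this
  · -- merge
    intro j hjJ C hC hCn
    constructor
    · rw [hD j]
      apply DormHelper.torusDiam_le'
      intro x hx y hy
      have h1 := DormHelper.partSet_dist hmu (by omega : j + 1 ≤ 2 * m) hC x hx y hy
      have h2 := DormHelper.diam_arith hr j
      have e : j + 1 + 1 = j + 2 := by omega
      rw [e] at h1
      omega
    · exact DormHelper.partSet_merge hn1 (by omega) A' hC hCn
  · -- final
    exact ⟨↑(DormHelper.S n r m A' J), DormHelper.partSet_final hn1 A' hSnonempty⟩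
  · -- size of the last level
    rw [Set.ncard_coe_finset, hancard]
    have hS : ((DormHelper.S n r m A' J).card : ℝ) + Tt = (A'.card : ℝ) := by
      exact_mod_cast hScard
    have hXn : (X : ℝ) + (A'.card : ℝ) = (n : ℝ) ^ 2 := by exact_mod_cast hXa
    have h2a' : ((n : ℝ)) ^ 2 ≤ 2 * (A'.card : ℝ) := by exact_mod_cast h2a
    linarith
  · -- level-0 clusters
    intro C hC
    have hdist := DormHelper.partSet_dist hmu (by omega : (0 : ℕ) ≤ 2 * m) hC
    have hred : 4 * r * 2 ^ ((0 + 1) / 2) - 1 = 4 * r - 1 := by norm_num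
    rw [hred] at hdist
    constructor
    · -- 8r-connected
      intro x hx y hy
      refine ⟨1, fun t => if t = 0 then x else y, by simp, by simp, ?_, ?_⟩
      · intro j hj
        interval_cases j
        · simpa using hx
        · simpa using hy
      · intro j hj
        interval_cases j
        have hxy := hdist x hx y hy
        have hgoal : torusDist x y ≤ 8 * r := by omega
        simpa using hgoal
    · -- density
      intro x hx
      have hsub : C ⊆ torusBall x (4 * r) := by
        intro y hy
        have := hdist x hx y hy
        show torusDist x y ≤ 4 * r
        omega
      rw [Set.inter_eq_self_of_subset_left hsub]
      have := DormHelper.partSet_card hC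
      simpa [DormHelper.theta] using this
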